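/- Let (E_k) be a sequence of compact subsets of ℝ Kuratowski-converging to a compact set E, and ϑ_k: E_k → X, ϑ: E → X with graph(ϑ) ⊂ Li_k graph(ϑ_k) (i.e. for every s ∈ E there exist s_k ∈ E_k with s_k → s and ϑ_k(s_k) → ϑ(s)). If d is lower semicontinuous on X × X, then Var(ϑ, E) ≤ liminf_{k→∞} Var(ϑ_k, E_k), where Var denotes the pointwise d-total variation. -/

import Mathlib

open Set Filter Topology ENNReal

/-- Pointwise total variation of `ϑ : ℝ → X` on `E ⊆ ℝ` with respect to an
(extended-valued) quasi-distance `d`. -/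
noncomputable def pVar {X : Type*} (d : X → X → ℝ≥0∞) (ϑ : ℝ → X) (E : Set ℝ) : ℝ≥0∞ :=
  sSup {s | ∃ (n : ℕ) (σ : ℕ → ℝ), StrictMonoOn σ (Set.Iic n) ∧ (∀ i ≤ n, σ i ∈ E) ∧
    s = ∑ i ∈ Finset.range n, d (ϑ (σ i)) (ϑ (σ (i+1)))}

/-- A lower semicontinuous `ℝ≥0∞`-valued function is sequentially lsc. -/
lemma lsc_seq_aux {Y : Type*} [TopologicalSpace Y] {f : Y → ℝ≥0∞}
    (hf : LowerSemicontinuous f) {u : ℕ → Y} {p : Y} (hu : Tendsto u atTop (𝓝 p)) :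
    f p ≤ Filter.liminf (fun k => f (u k)) atTop := by
  rw [Filter.le_liminf_iff]
  intro y hy
  exact hu.eventually (hf p y hy)

set_option maxHeartbeats 1000000 in
/-- superadditivity of liminf in `ℝ≥0∞`. -/
lemma add_liminf_le_aux (uu vv : ℕ → ℝ≥0∞) :
    Filter.liminf uu atTop + Filter.liminf vv atTop ≤
      Filter.liminf (fun k => uu k + vv k) atTop := by
  rw [liminf_eq_iSup_iInf_of_nat, liminf_eq_iSup_iInf_of_nat, liminf_eq_iSup_iInf_of_nat,
    ENNReal.iSup_add_iSup (fun i j => ⟨max i j,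
      add_le_add
        (le_iInf₂ fun k hk => iInf₂_le k (le_trans (le_max_left i j) hk))
        (le_iInf₂ fun k hk => iInf₂_le k (le_trans (le_max_right i j) hk))⟩)]
  apply iSup_le
  intro m
  refine le_trans ?_ (le_iSup (fun m => ⨅ i ≥ m, (uu i + vv i)) m)
  exact le_iInf₂ fun k hk => add_le_add (iInf₂_le k hk) (iInf₂_le k hk)

/-- sum of liminfs is at most the liminf of the sum, in `ℝ≥0∞`. -/
lemma sum_liminf_le_aux (u : ℕ → ℕ → ℝ≥0∞) (n : ℕ) :
    ∑ i ∈ Finset.range n, Filter.liminf (fun k => u i k) atTop ≤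
      Filter.liminf (fun k => ∑ i ∈ Finset.range n, u i k) atTop := by
  induction n with
  | zero => simp
  | succ n ih =>
    simp only [Finset.sum_range_succ]
    calc (∑ i ∈ Finset.range n, Filter.liminf (fun k => u i k) atTop)
          + Filter.liminf (fun k => u n k) atTop
        ≤ Filter.liminf (fun k => ∑ i ∈ Finset.range n, u i k) atTop
          + Filter.liminf (fun k => u n k) atTop := by gcongr
      _ ≤ Filter.liminf (fun k => (∑ i ∈ Finset.range n, u i k) + u n k) atTop :=
          add_liminf_le_aux _ _

/-- lower semicontinuity of the total variation along sequences of
transitions `ϑ_k : E_k → X` whose graphs converge in the Kuratowski-liminf sense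
to the graph of `ϑ : E → X`, the compact sets `E_k` Kuratowski-converging to `E`,
for a lower semicontinuous quasi-distance `d`. -/
theorem stmt16 {X : Type*} [TopologicalSpace X] [FirstCountableTopology X]
    (d : X → X → ℝ≥0∞)
    (hlsc : LowerSemicontinuous (fun p : X × X => d p.1 p.2))
    (Ek : ℕ → Set ℝ) (E : Set ℝ)
    (hEk : ∀ k, IsCompact (Ek k)) (hE : IsCompact E)
    (hLi : E = {x : ℝ | ∃ s : ℕ → ℝ, (∀ k, s k ∈ Ek k) ∧ Tendsto s atTop (𝓝 x)})
    (hLs : E = {x : ℝ | ∃ φ : ℕ → ℕ, StrictMono φ ∧ ∃ s : ℕ → ℝ,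
      (∀ n, s n ∈ Ek (φ n)) ∧ Tendsto s atTop (𝓝 x)})
    (ϑk : ℕ → ℝ → X) (ϑ : ℝ → X)
    (hgraph : ∀ r ∈ E, ∃ s : ℕ → ℝ, (∀ k, s k ∈ Ek k) ∧ Tendsto s atTop (𝓝 r) ∧
      Tendsto (fun k => ϑk k (s k)) atTop (𝓝 (ϑ r))) :
    pVar d ϑ E ≤ Filter.liminf (fun k => pVar d (ϑk k) (Ek k)) atTop := by
  rw [pVar]
  apply sSup_le
  rintro s ⟨n, σ, hmono, hmem, rfl⟩
  choose! t ht1 ht2 ht3 using hgraph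
  -- the approximating sequences
  set u : ℕ → ℕ → ℝ := fun i k => t (σ i) k with hu
  have hmemE : ∀ i ≤ n, σ i ∈ E := hmem
  -- eventual strict monotonicity of the approximating partition
  have hev : ∀ᶠ k in atTop, ∀ i ∈ Finset.range n, u i k < u (i+1) k := by
    rw [eventually_all_finset]
    intro i hi'
    have hi : i < n := Finset.mem_range.mp hi'
    have hlt : σ i < σ (i+1) :=
      hmono (Set.mem_Iic.2 (le_of_lt (lt_of_lt_of_le hi (Nat.le_refl n))))
        (Set.mem_Iic.2 (Nat.succ_le_of_lt hi)) (Nat.lt_succ_self i)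
    exact Filter.Tendsto.eventually_lt
      (ht2 (σ i) (hmemE i (le_of_lt hi)))
      (ht2 (σ (i+1)) (hmemE (i+1) (Nat.succ_le_of_lt hi))) hlt
  -- eventually the approximate variation sum is at most the approximate pVar
  have hevle : ∀ᶠ k in atTop,
      (∑ i ∈ Finset.range n, d (ϑk k (u i k)) (ϑk k (u (i+1) k))) ≤
        pVar d (ϑk k) (Ek k) := by
    filter_upwards [hev] with k hk
    apply le_sSup
    refine ⟨n, fun i => if i ≤ n then u i k else u n k + ((i : ℝ) - n), ?_, ?_, ?_⟩
    · intro a _ b _ hab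
      -- strict monotonicity: reduce to the global strict mono claim
      have : StrictMono (fun i => if i ≤ n then u i k else u n k + ((i : ℝ) - n)) := by
        apply strictMono_nat_of_lt_succ
        intro i
        by_cases h1 : i + 1 ≤ n
        · have h0 : i ≤ n := Nat.le_of_succ_le h1
          simp only [h0, h1, if_pos]
          exact hk i (Finset.mem_range.mpr h1)
        · by_cases h0 : i ≤ n
          · have hin : i = n := le_antisymm h0 (by omega)
            subst hin
            simp only [le_refl, if_pos, if_neg h1]
            have : ((i : ℝ) + 1) - i = 1 := by ring
            push_cast
            rw [this]
            linarith
          · simp only [if_neg h0, if_neg (by omega : ¬ i + 1 ≤ n)]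
            have : (i : ℝ) < (i : ℝ) + 1 := by linarith
            push_cast
            linarith
      exact this hab
    · intro i hi
      simp only [if_pos hi]
      exact ht1 (σ i) (hmemE i hi) k
    · apply Finset.sum_congr rfl
      intro i hi
      rw [Finset.mem_range] at hi
      simp [hi.le, Nat.succ_le_of_lt hi]
  -- each term of the limit sum bounds the corresponding term by lsc
  have hterm : ∀ i < n, d (ϑ (σ i)) (ϑ (σ (i+1))) ≤
      Filter.liminf (fun k => d (ϑk k (u i k)) (ϑk k (u (i+1) k))) atTop := by
    intro i hi
    have h1 : Tendsto (fun k => (ϑk k (u i k), ϑk k (u (i+1) k))) atTop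
        (𝓝 (ϑ (σ i), ϑ (σ (i+1)))) :=
      (ht3 (σ i) (hmemE i (le_of_lt hi))).prodMk_nhds
        (ht3 (σ (i+1)) (hmemE (i+1) (Nat.succ_le_of_lt hi)))
    exact lsc_seq_aux hlsc h1
  calc ∑ i ∈ Finset.range n, d (ϑ (σ i)) (ϑ (σ (i+1)))
      ≤ ∑ i ∈ Finset.range n,
          Filter.liminf (fun k => d (ϑk k (u i k)) (ϑk k (u (i+1) k))) atTop := by
        apply Finset.sum_le_sum
        intro i hi
        exact hterm i (Finset.mem_range.mp hi)
    _ ≤ Filter.liminf (fun k => ∑ i ∈ Finset.range n,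
          d (ϑk k (u i k)) (ϑk k (u (i+1) k))) atTop :=
        sum_liminf_le_aux _ n
    _ ≤ Filter.liminf (fun k => pVar d (ϑk k) (Ek k)) atTop :=
        Filter.liminf_le_liminf hevle
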